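/- (Rational approximation of weightings) Let M be a system of means, n ≥ 1, w ∈ Δ_n, x ∈ (ℝ≥0)^n and δ > 0. Then there exist w', w'' ∈ Δ_n with all coordinates rational such that M(w', x) ≥ M(w, x) ≥ M(w'', x), ‖w − w'‖_∞ < δ and ‖w − w''‖_∞ < δ. -/

import Mathlib

open scoped NNReal ENNReal BigOperators

/-- The power mean `M_p` of order `p ∈ [0,∞]` with weights `w` and arguments `x`. -/
noncomputable def powerMean (p : ℝ≥0∞) {n : ℕ} (w x : Fin n → ℝ≥0) : ℝ≥0 :=
  if p = ∞ then (Finset.univ.filter (fun i => 0 < w i)).sup x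
  else if p = 0 then ∏ i, x i ^ ((w i : ℝ))
  else (∑ i, w i * x i ^ p.toReal) ^ (1 / p.toReal)

/-- A system of means: for each `n`, a function `M n : Δ_n × ℝ≥0ⁿ → ℝ≥0`
(defined on all of `ℝ≥0ⁿ × ℝ≥0ⁿ`, with the axioms demanded only when `∑ w = 1`),
satisfying functoriality, consistency and monotonicity. -/
structure MeanSystem where
  M : ∀ n : ℕ, (Fin n → ℝ≥0) → (Fin n → ℝ≥0) → ℝ≥0
  functorial : ∀ {m n : ℕ} (f : Fin m → Fin n) (w : Fin m → ℝ≥0),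
    (∑ i, w i) = 1 → ∀ x : Fin n → ℝ≥0,
      M n (fun j => ∑ i ∈ Finset.univ.filter (fun i => f i = j), w i) x = M m w (x ∘ f)
  consistent : ∀ c : ℝ≥0, M 1 (fun _ => 1) (fun _ => c) = c
  mono : ∀ {n : ℕ} (w x y : Fin n → ℝ≥0), (∑ i, w i) = 1 →
    (∀ i, x i ≤ y i) → M n w x ≤ M n w y

/-- Multiplicativity of a system of means, with respect to the fixed bijection
`finProdFinEquiv : Fin m × Fin n ≃ Fin (m * n)`. -/
def MeanSystem.IsMultiplicative (S : MeanSystem) : Prop :=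
  ∀ {m n : ℕ} (w x : Fin m → ℝ≥0) (v y : Fin n → ℝ≥0),
    (∑ i, w i) = 1 → (∑ j, v j) = 1 →
    S.M (m * n) (fun k => w (finProdFinEquiv.symm k).1 * v (finProdFinEquiv.symm k).2)
        (fun k => x (finProdFinEquiv.symm k).1 * y (finProdFinEquiv.symm k).2)
      = S.M m w x * S.M n v y

/-- Convexity of a system of means. -/
def MeanSystem.IsConvex (S : MeanSystem) : Prop :=
  ∀ {n : ℕ} (w x y : Fin n → ℝ≥0), (∑ i, w i) = 1 →
    S.M n w (fun i => (x i + y i) / 2) ≤ max (S.M n w x) (S.M n w y)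

/-- A system of means depends only on the values of `x` on the support of `w`. -/
lemma MeanSystem.support_congr (S : MeanSystem) {n : ℕ} (w x y : Fin n → ℝ≥0)
    (hw : (∑ i, w i) = 1) (h : ∀ i, w i ≠ 0 → x i = y i) :
    S.M n w x = S.M n w y := by
  classical
  obtain ⟨i0, hi0⟩ : ∃ i0, w i0 ≠ 0 := by
    by_contra h'
    push_neg at h'
    simp [h'] at hw
  set f : Fin n → Fin n := fun i => if w i = 0 then i0 else i with hf
  have hfi : ∀ i, w i ≠ 0 → f i = i := fun i hi => by simp [hf, hi]
  have hpush : (fun j => ∑ i ∈ Finset.univ.filter (fun i => f i = j), w i) = w := by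
    funext j
    rw [← Finset.sum_filter_ne_zero]
    by_cases hj : w j = 0
    · rw [hj, Finset.sum_eq_zero]
      intro i hi
      simp only [Finset.mem_filter, Finset.mem_univ, true_and] at hi
      obtain ⟨h1, h2⟩ := hi
      rw [hfi i h2] at h1
      rw [h1]
      exact hj
    · have hset : (Finset.univ.filter (fun i => f i = j)).filter (fun i => w i ≠ 0)
          = {j} := by
        ext i
        simp only [Finset.mem_filter, Finset.mem_univ, true_and, Finset.mem_singleton]
        constructor
        · rintro ⟨h1, h2⟩
          rw [hfi i h2] at h1
          exact h1
        · intro hij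
          subst hij
          exact ⟨hfi i hj, hj⟩
      rw [hset, Finset.sum_singleton]
  have h1 := S.functorial f w hw x
  have h2 := S.functorial f w hw y
  rw [hpush] at h1 h2
  rw [h1, h2]
  congr 1
  funext i
  by_cases hi : w i = 0
  · simp only [Function.comp, hf, hi, if_pos]
    exact h i0 hi0
  · simp only [Function.comp, hf, hi, if_neg, ite_false]
    exact h i hi

/-- Transport lemma: if mass can be moved from `w` to `v` along a coupling that only moves
mass from indices with smaller `x` to indices with larger `x`, the mean increases. -/
lemma MeanSystem.transport (S : MeanSystem) {n : ℕ} (w v x : Fin n → ℝ≥0)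
    (P : Fin n → Fin n → ℝ≥0)
    (hrow : ∀ i, (∑ j, P i j) = w i)
    (hcol : ∀ j, (∑ i, P i j) = v j)
    (hw : (∑ i, w i) = 1)
    (hsupp : ∀ i j, P i j ≠ 0 → x i ≤ x j) :
    S.M n w x ≤ S.M n v x := by
  classical
  set e := (finProdFinEquiv : Fin n × Fin n ≃ Fin (n * n)) with he
  set u : Fin (n * n) → ℝ≥0 := fun k => P (e.symm k).1 (e.symm k).2 with hu
  have hsum : (∑ k, u k) = 1 := by
    rw [Fintype.sum_equiv e.symm u (fun p => P p.1 p.2) (fun k => rfl)]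
    rw [Fintype.sum_prod_type]
    simp_rw [hrow]
    exact hw
  set f1 : Fin (n * n) → Fin n := fun k => (e.symm k).1 with hf1
  set f2 : Fin (n * n) → Fin n := fun k => (e.symm k).2 with hf2
  have hpush1 : (fun j => ∑ k ∈ Finset.univ.filter (fun k => f1 k = j), u k) = w := by
    funext i
    rw [Finset.sum_filter]
    rw [Fintype.sum_equiv e.symm (fun k => if f1 k = i then u k else 0)
      (fun p => if p.1 = i then P p.1 p.2 else 0) (fun k => rfl)]
    rw [Fintype.sum_prod_type]
    show (∑ x : Fin n, ∑ y : Fin n, if x = i then P x y else 0) = w i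
    have hin : ∀ x : Fin n, (∑ y, if x = i then P x y else 0) = if x = i then w x else 0 :=
      fun x => by by_cases h : x = i <;> simp [h, hrow]
    simp_rw [hin]
    simp
  have hpush2 : (fun j => ∑ k ∈ Finset.univ.filter (fun k => f2 k = j), u k) = v := by
    funext j
    rw [Finset.sum_filter]
    rw [Fintype.sum_equiv e.symm (fun k => if f2 k = j then u k else 0)
      (fun p => if p.2 = j then P p.1 p.2 else 0) (fun k => rfl)]
    rw [Fintype.sum_prod_type, Finset.sum_comm]
    show (∑ y : Fin n, ∑ x : Fin n, if y = j then P x y else 0) = v j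
    have hin : ∀ y : Fin n, (∑ x, if y = j then P x y else 0) = if y = j then v y else 0 :=
      fun y => by by_cases h : y = j <;> simp [h, hcol]
    simp_rw [hin]
    simp
  have h1 := S.functorial f1 u hsum x
  have h2 := S.functorial f2 u hsum x
  rw [hpush1] at h1
  rw [hpush2] at h2
  set y : Fin (n * n) → ℝ≥0 := fun k => if u k = 0 then (x ∘ f1) k else (x ∘ f2) k with hy
  have step1 : S.M (n * n) u (x ∘ f1) ≤ S.M (n * n) u y := by
    apply S.mono _ _ _ hsum
    intro k
    by_cases hk : u k = 0
    · simp [hy, hk]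
    · simp only [hy, hk, ite_false]
      exact hsupp _ _ hk
  have step2 : S.M (n * n) u y = S.M (n * n) u (x ∘ f2) := by
    apply S.support_congr _ _ _ hsum
    intro k hk
    simp [hy, hk]
  rw [h1, h2]
  rw [← step2]
  exact step1

/-- Shifting weight towards an index `j` where `x` is maximal increases the mean. -/
lemma MeanSystem.shift_up (S : MeanSystem) {n : ℕ} (w v x : Fin n → ℝ≥0) (j : Fin n)
    (hw : (∑ i, w i) = 1) (hv : (∑ i, v i) = 1)
    (hle : ∀ i, i ≠ j → v i ≤ w i) (hx : ∀ i, x i ≤ x j) :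
    S.M n w x ≤ S.M n v x := by
  classical
  set P : Fin n → Fin n → ℝ≥0 := fun i k =>
    if i = j then (if k = j then w j else 0)
    else (if k = i then v i else 0) + (if k = j then w i - v i else 0) with hP
  have colj : (∑ i, P i j) = v j := by
    rw [← Finset.add_sum_erase _ _ (Finset.mem_univ j)]
    have hPj : P j j = w j := by simp [hP]
    have hrest : (∑ i ∈ Finset.univ.erase j, P i j)
        = ∑ i ∈ Finset.univ.erase j, (w i - v i) := by
      refine Finset.sum_congr rfl fun i hi => ?_
      have hij := Finset.ne_of_mem_erase hi
      simp [hP, hij, Ne.symm hij]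
    rw [hPj, hrest]
    have hcan : w j + (∑ i ∈ Finset.univ.erase j, (w i - v i))
          + (∑ i ∈ Finset.univ.erase j, v i)
        = v j + (∑ i ∈ Finset.univ.erase j, v i) := by
      rw [add_assoc, ← Finset.sum_add_distrib]
      have h1 : (∑ i ∈ Finset.univ.erase j, (w i - v i + v i))
          = ∑ i ∈ Finset.univ.erase j, w i :=
        Finset.sum_congr rfl fun i hi =>
          tsub_add_cancel_of_le (hle i (Finset.ne_of_mem_erase hi))
      rw [h1, Finset.add_sum_erase _ _ (Finset.mem_univ j), hw,
          Finset.add_sum_erase _ _ (Finset.mem_univ j), hv]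
    exact add_right_cancel hcan
  apply S.transport w v x P ?_ ?_ hw ?_
  · intro i
    by_cases hi : i = j
    · subst hi; simp [hP]
    · simp only [hP, hi, ite_false]
      rw [Finset.sum_add_distrib]
      simp only [Finset.sum_ite_eq', Finset.mem_univ, if_pos]
      exact add_tsub_cancel_of_le (hle i hi)
  · intro k
    by_cases hk : k = j
    · rw [hk]; exact colj
    · have hPk : ∀ i, P i k = if i = k then v k else 0 := by
        intro i
        by_cases hi : i = j
        · rw [if_neg]
          · simp [hP, hi, hk]
          · rintro rfl; exact hk hi
        · by_cases hik : i = k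
          · subst hik; simp [hP, hi, hk]
          · have hki : ¬ k = i := fun h => hik h.symm
            simp only [hP, hi, ite_false, if_neg hki, if_neg hk, if_neg hik, add_zero]
      simp_rw [hPk]
      simp
  · intro i k hne
    by_cases hkj : k = j
    · rw [hkj]; exact hx i
    · by_cases hki : k = i
      · rw [hki]
      · exfalso
        apply hne
        by_cases hi : i = j
        · simp [hP, hi, hkj]
        · simp [hP, hi, hkj, fun h : k = i => hki h]

/-- Shifting weight away from an index `j` where `x` is minimal increases the mean. -/
lemma MeanSystem.shift_down (S : MeanSystem) {n : ℕ} (w v x : Fin n → ℝ≥0) (j : Fin n)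
    (hw : (∑ i, w i) = 1) (hv : (∑ i, v i) = 1)
    (hle : ∀ i, i ≠ j → w i ≤ v i) (hx : ∀ i, x j ≤ x i) :
    S.M n w x ≤ S.M n v x := by
  classical
  set P : Fin n → Fin n → ℝ≥0 := fun i k =>
    if i = j then (if k = j then v j else v k - w k)
    else (if k = i then w i else 0) with hP
  have rowj : (∑ k, P j k) = w j := by
    rw [← Finset.add_sum_erase _ _ (Finset.mem_univ j)]
    have hPj : P j j = v j := by simp [hP]
    have hrest : (∑ k ∈ Finset.univ.erase j, P j k)
        = ∑ k ∈ Finset.univ.erase j, (v k - w k) := by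
      refine Finset.sum_congr rfl fun k hk => ?_
      simp [hP, Finset.ne_of_mem_erase hk]
    rw [hPj, hrest]
    have hcan : v j + (∑ k ∈ Finset.univ.erase j, (v k - w k))
          + (∑ k ∈ Finset.univ.erase j, w k)
        = w j + (∑ k ∈ Finset.univ.erase j, w k) := by
      rw [add_assoc, ← Finset.sum_add_distrib]
      have h1 : (∑ k ∈ Finset.univ.erase j, (v k - w k + w k))
          = ∑ k ∈ Finset.univ.erase j, v k :=
        Finset.sum_congr rfl fun k hk =>
          tsub_add_cancel_of_le (hle k (Finset.ne_of_mem_erase hk))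
      rw [h1, Finset.add_sum_erase _ _ (Finset.mem_univ j), hv,
          Finset.add_sum_erase _ _ (Finset.mem_univ j), hw]
    exact add_right_cancel hcan
  apply S.transport w v x P ?_ ?_ hw ?_
  · intro i
    by_cases hi : i = j
    · rw [hi]; exact rowj
    · simp only [hP, hi, ite_false]
      simp
  · intro k
    by_cases hk : k = j
    · have hPk : ∀ i, P i k = if i = k then v k else 0 := by
        intro i
        by_cases hi : i = k
        · subst hi; simp [hP, hk]
        · rw [if_neg hi]
          by_cases hij : i = j
          · exact absurd (hij.trans hk.symm) hi
          · have hki : ¬ k = i := fun h => hi h.symm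
            simp only [hP, hij, ite_false, if_neg hki]
      simp_rw [hPk]
      simp
    · rw [← Finset.add_sum_erase _ _ (Finset.mem_univ j)]
      have hPj : P j k = v k - w k := by simp [hP, hk]
      have hrest : (∑ i ∈ Finset.univ.erase j, P i k)
          = ∑ i ∈ Finset.univ.erase j, (if k = i then w i else 0) := by
        refine Finset.sum_congr rfl fun i hi => ?_
        simp [hP, Finset.ne_of_mem_erase hi]
      rw [hPj, hrest]
      have hkmem : k ∈ Finset.univ.erase j := Finset.mem_erase.mpr ⟨hk, Finset.mem_univ k⟩
      rw [Finset.sum_ite_eq _ k, if_pos hkmem]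
      exact tsub_add_cancel_of_le (hle k hk)
  · intro i k hne
    by_cases hi : i = j
    · rw [hi]; exact hx k
    · by_cases hki : k = i
      · rw [hki]
      · exfalso
        apply hne
        simp [hP, hi, fun h : k = i => hki h]

/-- Rational approximation of a weighting from below, dumping the error on index `j`. -/
lemma exists_rat_close {n : ℕ} (w : Fin n → ℝ≥0) (hw : (∑ i, w i) = 1)
    (j : Fin n) {δ : ℝ} (hδ : 0 < δ) :
    ∃ v : Fin n → ℝ≥0, (∀ i, ∃ q : ℚ, (v i : ℝ) = q) ∧ (∑ i, v i) = 1 ∧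
      (∀ i, i ≠ j → v i ≤ w i) ∧ (∀ i, |(w i : ℝ) - (v i : ℝ)| < δ) := by
  classical
  have hn : 0 < n := j.pos
  have hn' : (0 : ℝ) < n := by exact_mod_cast hn
  set ε : ℝ := δ / n with hε
  have hε0 : 0 < ε := div_pos hδ hn'
  have hεδ : ε ≤ δ := by
    rw [hε]
    exact div_le_self hδ.le (by exact_mod_cast hn)
  have hchoice : ∀ i : Fin n, ∃ q : ℚ, 0 ≤ (q : ℝ) ∧ (q : ℝ) ≤ (w i : ℝ)
      ∧ (w i : ℝ) - q < ε := by
    intro i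
    by_cases h : (w i : ℝ) < ε
    · exact ⟨0, by norm_num, by simp, by simpa using h⟩
    · push_neg at h
      obtain ⟨q, hq1, hq2⟩ := exists_rat_btwn (show (w i : ℝ) - ε < w i by linarith)
      exact ⟨q, by linarith, hq2.le, by linarith⟩
  choose q hq0 hq1 hq2 using hchoice
  set qn : Fin n → ℝ≥0 := fun i => ⟨(q i : ℝ), hq0 i⟩ with hqn
  have hqnw : ∀ i, qn i ≤ w i := by
    intro i
    rw [← NNReal.coe_le_coe]
    exact hq1 i
  have hsle : (∑ i ∈ Finset.univ.erase j, qn i) ≤ 1 := by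
    calc (∑ i ∈ Finset.univ.erase j, qn i) ≤ ∑ i ∈ Finset.univ.erase j, w i :=
          Finset.sum_le_sum fun i _ => hqnw i
      _ ≤ ∑ i, w i := Finset.sum_le_sum_of_subset (Finset.subset_univ _)
      _ = 1 := hw
  set v : Fin n → ℝ≥0 :=
    fun i => if i = j then 1 - ∑ i' ∈ Finset.univ.erase j, qn i' else qn i with hv
  have hvsum : (∑ i, v i) = 1 := by
    rw [← Finset.add_sum_erase _ v (Finset.mem_univ j)]
    have h1 : (∑ i ∈ Finset.univ.erase j, v i) = ∑ i ∈ Finset.univ.erase j, qn i :=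
      Finset.sum_congr rfl fun i hi => by
        simp [hv, Finset.ne_of_mem_erase hi]
    rw [h1]
    simp only [hv, ite_true]
    exact tsub_add_cancel_of_le hsle
  -- coercion facts
  have hsum_coe : ((∑ i' ∈ Finset.univ.erase j, qn i' : ℝ≥0) : ℝ)
      = ∑ i' ∈ Finset.univ.erase j, (q i' : ℝ) := by
    push_cast
    rfl
  have hvj : ((v j : ℝ≥0) : ℝ) = 1 - ∑ i' ∈ Finset.univ.erase j, (q i' : ℝ) := by
    simp only [hv, ite_true]
    rw [NNReal.coe_sub hsle, NNReal.coe_one, hsum_coe]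
  have hwj : ((w j : ℝ≥0) : ℝ) = 1 - ∑ i' ∈ Finset.univ.erase j, (w i' : ℝ) := by
    have := Finset.add_sum_erase Finset.univ (fun i => ((w i : ℝ≥0) : ℝ)) (Finset.mem_univ j)
    have hw' : (∑ i, ((w i : ℝ≥0) : ℝ)) = 1 := by
      rw [← NNReal.coe_sum, hw, NNReal.coe_one]
    linarith [this, hw']
  refine ⟨v, ?_, hvsum, ?_, ?_⟩
  · intro i
    by_cases hi : i = j
    · refine ⟨1 - ∑ i' ∈ Finset.univ.erase j, q i', ?_⟩
      rw [hi, hvj]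
      push_cast
      rfl
    · exact ⟨q i, by simp [hv, hi, hqn]; rfl⟩
  · intro i hi
    simp only [hv, hi, ite_false]
    exact hqnw i
  · intro i
    by_cases hi : i = j
    · subst hi
      rw [hvj, hwj]
      have hdiff : (1 - ∑ i' ∈ Finset.univ.erase i, ((w i' : ℝ≥0) : ℝ))
          - (1 - ∑ i' ∈ Finset.univ.erase i, (q i' : ℝ))
          = -(∑ i' ∈ Finset.univ.erase i, ((w i' : ℝ≥0) : ℝ) - ∑ i' ∈ Finset.univ.erase i, (q i' : ℝ)) := by
        ring
      rw [hdiff, abs_neg]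
      rw [← Finset.sum_sub_distrib]
      have habs : |∑ i' ∈ Finset.univ.erase i, (((w i' : ℝ≥0) : ℝ) - (q i' : ℝ))|
          = ∑ i' ∈ Finset.univ.erase i, (((w i' : ℝ≥0) : ℝ) - (q i' : ℝ)) :=
        abs_of_nonneg (Finset.sum_nonneg fun i' _ => by linarith [hq1 i'])
      rw [habs]
      rcases Finset.eq_empty_or_nonempty (Finset.univ.erase i) with he | he
      · rw [he, Finset.sum_empty]; exact hδ
      · calc (∑ i' ∈ Finset.univ.erase i, (((w i' : ℝ≥0) : ℝ) - (q i' : ℝ)))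
            < ∑ _i' ∈ Finset.univ.erase i, ε :=
              Finset.sum_lt_sum_of_nonempty he fun i' _ => hq2 i'
          _ = (Finset.univ.erase i).card * ε := by
              rw [Finset.sum_const, nsmul_eq_mul]
          _ ≤ (n - 1 : ℕ) * ε := by
              have : (Finset.univ.erase i).card = n - 1 := by
                rw [Finset.card_erase_of_mem (Finset.mem_univ i), Finset.card_univ,
                  Fintype.card_fin]
              rw [this]
          _ < n * ε := by
              have h1 : ((n - 1 : ℕ) : ℝ) < (n : ℝ) := by
                have : (n - 1 : ℕ) < n := Nat.sub_lt hn one_pos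
                exact_mod_cast this
              exact mul_lt_mul_of_pos_right h1 hε0
          _ = δ := by
              rw [hε, mul_div_cancel₀ _ (ne_of_gt hn')]
    · simp only [hv, hi, ite_false]
      have : ((qn i : ℝ≥0) : ℝ) = (q i : ℝ) := rfl
      rw [this]
      rw [abs_of_nonneg (by linarith [hq1 i])]
      linarith [hq2 i]

/-- (Rational approximation of weightings) Given a system of means `M`, a weighting `w`,
arguments `x` and `δ > 0`, there are rational weightings `w', w''` within distance `δ` of `w`
in the `∞`-norm such that `M(w', x) ≥ M(w, x) ≥ M(w'', x)`. -/
theorem meanSystem_rational_approx (S : MeanSystem) (n : ℕ) (hn : 1 ≤ n)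
    (w x : Fin n → ℝ≥0) (hw : (∑ i, w i) = 1) (δ : ℝ) (hδ : 0 < δ) :
    ∃ w' w'' : Fin n → ℝ≥0,
      (∀ i, ∃ q : ℚ, (w' i : ℝ) = q) ∧ (∑ i, w' i) = 1 ∧
      (∀ i, ∃ q : ℚ, (w'' i : ℝ) = q) ∧ (∑ i, w'' i) = 1 ∧
      S.M n w x ≤ S.M n w' x ∧ S.M n w'' x ≤ S.M n w x ∧
      (∀ i, |(w i : ℝ) - (w' i : ℝ)| < δ) ∧ (∀ i, |(w i : ℝ) - (w'' i : ℝ)| < δ) := by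
  have hne : (Finset.univ : Finset (Fin n)).Nonempty := by
    have : Nonempty (Fin n) := ⟨⟨0, hn⟩⟩
    exact Finset.univ_nonempty
  obtain ⟨jmax, -, hmax⟩ := Finset.exists_max_image Finset.univ x hne
  obtain ⟨jmin, -, hmin⟩ := Finset.exists_min_image Finset.univ x hne
  obtain ⟨w', hq', hsum', hle', hdist'⟩ := exists_rat_close w hw jmax hδ
  obtain ⟨w'', hq'', hsum'', hle'', hdist''⟩ := exists_rat_close w hw jmin hδ
  refine ⟨w', w'', hq', hsum', hq'', hsum'', ?_, ?_, hdist', hdist''⟩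
  · exact S.shift_up w w' x jmax hw hsum' hle' fun i => hmax i (Finset.mem_univ i)
  · exact S.shift_down w'' w x jmin hsum'' hw (fun i hi => hle'' i hi)
      fun i => hmin i (Finset.mem_univ i)
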